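/- Let N ≥ 1, let U be a random matrix drawn from the Haar (uniform) probability measure on the orthogonal group O(N), let x, y ∈ ℝ^N be fixed unit vectors, and let t > 0. Then Pr[ xᵀ·U·y ≥ t/√N ] ≤ 2·e^{-t²/8}. -/

import Mathlib

open scoped BigOperators
open MeasureTheory

/-- `U : Fin N → Fin N → ℝ` (viewed as an `N × N` real matrix `U i j`) is
orthogonal: its columns and its rows are orthonormal. -/
def IsOrthogonal {N : ℕ} (U : Fin N → Fin N → ℝ) : Prop :=
  (∀ j₁ j₂ : Fin N, ∑ i, U i j₁ * U i j₂ = if j₁ = j₂ then (1 : ℝ) else 0) ∧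
  (∀ i₁ i₂ : Fin N, ∑ j, U i₁ j * U i₂ j = if i₁ = i₂ then (1 : ℝ) else 0)

open Finset


lemma exp_add_exp_neg_le (a : ℝ) : Real.exp a + Real.exp (-a) ≤ 2 * Real.exp (a ^ 2 / 2) := by
  have := Real.cosh_le_exp_half_sq a
  rw [Real.cosh_eq] at this
  linarith

lemma hoeffding_count (N : ℕ) (v : Fin N → ℝ) (hv : ∑ i, v i ^ 2 = 1) (t : ℝ) (ht : 0 < t) :
    ((Finset.univ.filter
        (fun ε : Fin N → Bool => t ≤ ∑ i, (if ε i then (1:ℝ) else -1) * v i)).card : ℝ)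
      ≤ 2 ^ N * Real.exp (-t ^ 2 / 2) := by
  set S : (Fin N → Bool) → ℝ := fun ε => ∑ i, (if ε i then (1:ℝ) else -1) * v i with hS
  have swap : ∀ f : Fin N → Bool → ℝ,
      ∑ ε : Fin N → Bool, ∏ i, f i (ε i) = ∏ i, ∑ b : Bool, f i b := by
    intro f
    rw [Finset.prod_univ_sum, Fintype.piFinset_univ]
  have key : ∑ ε : Fin N → Bool, Real.exp (t * S ε)
      = ∏ i, ∑ b : Bool, Real.exp (t * ((if b then (1:ℝ) else -1) * v i)) := by
    rw [← swap]
    refine Finset.sum_congr rfl fun ε _ => ?_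
    rw [← Real.exp_sum, hS, Finset.mul_sum]
  have bound : ∑ ε : Fin N → Bool, Real.exp (t * S ε) ≤ 2 ^ N * Real.exp (t ^ 2 / 2) := by
    rw [key]
    calc ∏ i, ∑ b : Bool, Real.exp (t * ((if b then (1:ℝ) else -1) * v i))
        ≤ ∏ i, (2 * Real.exp ((t * v i) ^ 2 / 2)) := by
          apply Finset.prod_le_prod
          · intro i _
            apply Finset.sum_nonneg; intro b _; positivity
          · intro i _
            rw [Fintype.sum_bool]
            simp only [if_true, if_false, one_mul]
            have h := exp_add_exp_neg_le (t * v i)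
            calc Real.exp (t * v i) + Real.exp (t * (-1 * v i))
                = Real.exp (t * v i) + Real.exp (-(t * v i)) := by ring_nf
              _ ≤ 2 * Real.exp ((t * v i) ^ 2 / 2) := h
      _ = 2 ^ N * Real.exp (t ^ 2 / 2) := by
          rw [Finset.prod_mul_distrib, Finset.prod_const, ← Real.exp_sum]
          congr 1
          · simp
          · rw [show ∑ i, (t * v i)^2/2 = t^2/2 * ∑ i, v i ^2 by
              rw [Finset.mul_sum]; exact Finset.sum_congr rfl fun i _ => by ring]
            rw [hv]; ring
  have lower : ((Finset.univ.filter (fun ε : Fin N → Bool => t ≤ S ε)).card : ℝ) * Real.exp (t ^ 2)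
      ≤ ∑ ε : Fin N → Bool, Real.exp (t * S ε) := by
    calc ((Finset.univ.filter (fun ε : Fin N → Bool => t ≤ S ε)).card : ℝ) * Real.exp (t ^ 2)
        = ∑ _ε ∈ Finset.univ.filter (fun ε : Fin N → Bool => t ≤ S ε), Real.exp (t ^ 2) := by
          rw [Finset.sum_const, nsmul_eq_mul]
      _ ≤ ∑ ε ∈ Finset.univ.filter (fun ε : Fin N → Bool => t ≤ S ε), Real.exp (t * S ε) := by
          apply Finset.sum_le_sum
          intro ε hε
          rw [Finset.mem_filter] at hε
          apply Real.exp_le_exp.2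
          have := hε.2
          nlinarith
      _ ≤ ∑ ε : Fin N → Bool, Real.exp (t * S ε) := by
          apply Finset.sum_le_sum_of_subset_of_nonneg (Finset.filter_subset _ _)
          intro ε _ _; positivity
  have hexp : (0:ℝ) < Real.exp (t ^ 2) := Real.exp_pos _
  have h2 : Real.exp (t ^ 2 / 2) = Real.exp (-t ^ 2 / 2) * Real.exp (t ^ 2) := by
    rw [← Real.exp_add]; ring_nf
  have := lower.trans bound
  rw [h2, ← mul_assoc] at this
  exact le_of_mul_le_mul_right this hexp

lemma householder_exists {N : ℕ} (x z : Fin N → ℝ) (hx : ∑ i, x i ^ 2 = 1) (hz : ∑ i, z i ^ 2 = 1) :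
    ∃ V : Fin N → Fin N → ℝ, IsOrthogonal V ∧ ∀ j, ∑ i, z i * V i j = x j := by
  by_cases hxz : z = x
  · refine ⟨fun i j => if i = j then 1 else 0, ⟨fun j₁ j₂ => ?_, fun i₁ i₂ => ?_⟩, fun j => ?_⟩
    · simp [ite_mul, Finset.sum_ite_eq', eq_comm]
    · simp [mul_ite, Finset.sum_ite_eq, eq_comm]
    · simp [mul_ite, Finset.sum_ite_eq', hxz]
  · set w : Fin N → ℝ := fun i => z i - x i with hw
    set Sw : ℝ := ∑ i, w i ^ 2 with hSw
    have hwne : ∃ i, w i ≠ 0 := by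
      by_contra h
      push_neg at h
      exact hxz (funext fun i => by have := h i; simp [hw] at this; linarith)
    have hSpos : 0 < Sw := by
      obtain ⟨i, hi⟩ := hwne
      apply Finset.sum_pos' (fun j _ => sq_nonneg _) ⟨i, Finset.mem_univ i, by positivity⟩
    set c : ℝ := 2 / Sw with hc
    set V : Fin N → Fin N → ℝ := fun i j => (if i = j then 1 else 0) - c * w i * w j with hV
    have hdelta : ∀ j : Fin N, ∑ i, (if i = j then (1:ℝ) else 0) * w i = w j := by
      intro j; simp [ite_mul, Finset.sum_ite_eq']
    have hcol : ∀ j₁ j₂ : Fin N, ∑ i, V i j₁ * V i j₂ = if j₁ = j₂ then (1:ℝ) else 0 := by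
      intro j₁ j₂
      have expand : ∀ i, V i j₁ * V i j₂
          = (if i = j₁ then (1:ℝ) else 0) * (if i = j₂ then (1:ℝ) else 0)
            - c * w j₂ * ((if i = j₁ then (1:ℝ) else 0) * w i)
            - c * w j₁ * ((if i = j₂ then (1:ℝ) else 0) * w i)
            + (c ^ 2 * w j₁ * w j₂) * w i ^ 2 := by
        intro i; simp only [hV]; ring
      rw [Finset.sum_congr rfl fun i _ => expand i]
      simp only [Finset.sum_add_distrib, Finset.sum_sub_distrib, ← Finset.mul_sum]
      rw [hdelta j₁, hdelta j₂, ← hSw]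
      have hdd : ∑ i, (if i = j₁ then (1:ℝ) else 0) * (if i = j₂ then (1:ℝ) else 0)
          = if j₁ = j₂ then (1:ℝ) else 0 := by
        by_cases h : j₁ = j₂ <;>
          simp [ite_mul, Finset.sum_ite_eq', h, eq_comm]
      rw [hdd]
      have : c ^ 2 * w j₁ * w j₂ * Sw = 2 * c * w j₁ * w j₂ := by
        field_simp [hc]
        have hcS : c * Sw = 2 := by rw [hc]; exact div_mul_cancel₀ 2 hSpos.ne'
        rw [show c ^ 2 * w j₁ * w j₂ * Sw = c * w j₁ * w j₂ * (c * Sw) by ring, hcS]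
      rw [this]; ring
    have hsym : ∀ i j, V i j = V j i := by
      intro i j; simp only [hV]
      rw [show (if i = j then (1:ℝ) else 0) = (if j = i then (1:ℝ) else 0) by simp [eq_comm]]
      ring
    refine ⟨V, ⟨hcol, fun i₁ i₂ => ?_⟩, fun j => ?_⟩
    · rw [Finset.sum_congr rfl fun j _ => by rw [hsym i₁ j, hsym i₂ j]]
      exact hcol i₁ i₂
    · have expand : ∀ i, z i * V i j
          = (if i = j then (1:ℝ) else 0) * z i - (c * w j) * (z i * w i) := by
        intro i; simp only [hV]; ring
      rw [Finset.sum_congr rfl fun i _ => expand i]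
      simp only [Finset.sum_sub_distrib, ← Finset.mul_sum]
      have h1 : ∑ i, (if i = j then (1:ℝ) else 0) * z i = z j := by
        simp [ite_mul, Finset.sum_ite_eq']
      have h2 : Sw = 2 - 2 * ∑ i, z i * w i → c * ∑ i, z i * w i = 1 → True := fun _ _ => trivial
      have hzw : ∑ i, z i * w i = Sw / 2 := by
        have : Sw = ∑ i, (z i ^ 2 - 2 * z i * x i + x i ^ 2) := by
          rw [hSw]; exact Finset.sum_congr rfl fun i _ => by simp [hw]; ring
        rw [Finset.sum_add_distrib, Finset.sum_sub_distrib, hx, hz] at this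
        have hzx : ∑ i, z i * x i = 1 - Sw / 2 := by
          have h3 : ∑ i, 2 * z i * x i = 2 * ∑ i, z i * x i := by
            rw [Finset.mul_sum]; exact Finset.sum_congr rfl fun i _ => by ring
          rw [h3] at this; linarith
        have : ∑ i, z i * w i = (∑ i, z i ^ 2) - ∑ i, z i * x i := by
          rw [← Finset.sum_sub_distrib]
          exact Finset.sum_congr rfl fun i _ => by simp [hw]; ring
        rw [this, hz, hzx]; ring
      rw [h1, hzw]
      have hc1 : c * (Sw / 2) = 1 := by field_simp [hc]; rw [hc]; exact div_mul_cancel₀ 2 hSpos.ne'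
      have : c * w j * (Sw / 2) = w j := by
        rw [mul_comm c (w j), mul_assoc, hc1, mul_one]
      rw [this]; simp [hw]

/-- let `μ` be the Haar probability measure on the orthogonal
group `O(N)` (formalized, via its characterizing properties, as any Borel
probability measure on `N × N` real matrices that is concentrated on orthogonal
matrices and invariant under left multiplication by every orthogonal matrix).
For fixed unit vectors `x, y ∈ ℝ^N` and `t > 0`,
`Pr_{U ∼ μ}[ xᵀUy ≥ t/√N ] ≤ 2·e^{-t²/8}`. -/
theorem haar_bilinear_tail_bound (N : ℕ) (hN : 1 ≤ N)
    (μ : Measure (Fin N → Fin N → ℝ)) (hprob : IsProbabilityMeasure μ)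
    (horth : ∀ᵐ U ∂μ, IsOrthogonal U)
    (hinv : ∀ V : Fin N → Fin N → ℝ, IsOrthogonal V →
      μ.map (fun U => fun i j => ∑ l, V i l * U l j) = μ)
    (x y : Fin N → ℝ) (hx : ∑ i, x i ^ 2 = 1) (hy : ∑ j, y j ^ 2 = 1)
    (t : ℝ) (ht : 0 < t) :
    (μ {U | t / Real.sqrt N ≤ ∑ i, ∑ j, x i * U i j * y j}).toReal ≤
      2 * Real.exp (-t ^ 2 / 8) := by
  have hNpos : (0:ℝ) < N := by exact_mod_cast hN
  have hsN : (0:ℝ) < Real.sqrt N := Real.sqrt_pos.2 hNpos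
  have hsN2 : Real.sqrt N ^ 2 = N := Real.sq_sqrt hNpos.le
  -- the events
  set E : (Fin N → ℝ) → Set (Fin N → Fin N → ℝ) :=
    fun z => {U | t / Real.sqrt N ≤ ∑ i, ∑ j, z i * U i j * y j} with hE
  have hmeasE : ∀ z, MeasurableSet (E z) := by
    intro z
    have : Measurable fun U : Fin N → Fin N → ℝ => ∑ i, ∑ j, z i * U i j * y j := by fun_prop
    exact measurableSet_le measurable_const this
  -- the sign vectors
  set zv : (Fin N → Bool) → Fin N → ℝ :=
    fun ε i => (if ε i then (1:ℝ) else -1) / Real.sqrt N with hzv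
  have hzunit : ∀ ε, ∑ i, zv ε i ^ 2 = 1 := by
    intro ε
    have : ∀ i, zv ε i ^ 2 = 1 / N := by
      intro i
      by_cases h : ε i <;> simp [hzv, h, div_pow, hsN2]
    rw [Finset.sum_congr rfl fun i _ => this i, Finset.sum_const, Finset.card_univ]
    simp
    field_simp
  -- invariance: each sign event has the same measure as the target event
  have householder : ∀ z : Fin N → ℝ, ∑ i, z i ^ 2 = 1 →
      ∃ V : Fin N → Fin N → ℝ, IsOrthogonal V ∧ ∀ j, ∑ i, z i * V i j = x j :=
    fun z hz => householder_exists x z hx hz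
  have hEeq : ∀ ε : Fin N → Bool, μ (E (zv ε)) = μ (E x) := by
    intro ε
    obtain ⟨V, hV, hVx⟩ := householder (zv ε) (hzunit ε)
    have hmapmeas : Measurable (fun U : Fin N → Fin N → ℝ => fun i j => ∑ l, V i l * U l j) := by
      fun_prop
    have hpre : (fun U : Fin N → Fin N → ℝ => fun i j => ∑ l, V i l * U l j) ⁻¹' (E (zv ε))
        = E x := by
      ext U
      simp only [hE, Set.mem_preimage, Set.mem_setOf_eq]
      have : ∑ i, ∑ j, zv ε i * (∑ l, V i l * U l j) * y j
          = ∑ i, ∑ j, x i * U i j * y j := by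
        calc ∑ i, ∑ j, zv ε i * (∑ l, V i l * U l j) * y j
            = ∑ i, ∑ j, ∑ l, zv ε i * V i l * (U l j * y j) := by
              refine Finset.sum_congr rfl fun i _ => Finset.sum_congr rfl fun j _ => ?_
              rw [Finset.mul_sum, Finset.sum_mul]
              exact Finset.sum_congr rfl fun l _ => by ring
          _ = ∑ l, ∑ j, ∑ i, zv ε i * V i l * (U l j * y j) := by
              calc ∑ i, ∑ j, ∑ l, zv ε i * V i l * (U l j * y j)
                  = ∑ i, ∑ l, ∑ j, zv ε i * V i l * (U l j * y j) :=
                    Finset.sum_congr rfl fun i _ => Finset.sum_comm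
                _ = ∑ l, ∑ i, ∑ j, zv ε i * V i l * (U l j * y j) := Finset.sum_comm
                _ = ∑ l, ∑ j, ∑ i, zv ε i * V i l * (U l j * y j) :=
                    Finset.sum_congr rfl fun l _ => Finset.sum_comm
          _ = ∑ l, ∑ j, (∑ i, zv ε i * V i l) * (U l j * y j) := by
              refine Finset.sum_congr rfl fun l _ => Finset.sum_congr rfl fun j _ => ?_
              rw [Finset.sum_mul]
          _ = ∑ i, ∑ j, x i * U i j * y j := by
              refine Finset.sum_congr rfl fun l _ => Finset.sum_congr rfl fun j _ => ?_
              rw [hVx l]; ring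
      rw [this]
    have := hinv V hV
    calc μ (E (zv ε)) = (μ.map (fun U => fun i j => ∑ l, V i l * U l j)) (E (zv ε)) := by
          rw [this]
      _ = μ ((fun U : Fin N → Fin N → ℝ => fun i j => ∑ l, V i l * U l j) ⁻¹' (E (zv ε))) :=
          Measure.map_apply hmapmeas (hmeasE _)
      _ = μ (E x) := by rw [hpre]
  -- pointwise (a.e.) counting bound
  have hcount : ∀ᵐ U ∂μ, ∑ ε : Fin N → Bool, (E (zv ε)).indicator (1 : (Fin N → Fin N → ℝ) → ENNReal) U
      ≤ ENNReal.ofReal ((2:ℝ) ^ N * Real.exp (-t ^ 2 / 2)) := by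
    filter_upwards [horth] with U hU
    set v : Fin N → ℝ := fun i => ∑ j, U i j * y j with hvdef
    have hv : ∑ i, v i ^ 2 = 1 := by
      calc ∑ i, v i ^ 2
          = ∑ i, ∑ j, ∑ k, (U i j * y j) * (U i k * y k) := by
            refine Finset.sum_congr rfl fun i _ => ?_
            rw [hvdef, pow_two, Finset.sum_mul_sum]
        _ = ∑ j, ∑ k, ∑ i, (U i j * y j) * (U i k * y k) := by
            calc ∑ i, ∑ j, ∑ k, (U i j * y j) * (U i k * y k)
                = ∑ j, ∑ i, ∑ k, (U i j * y j) * (U i k * y k) := Finset.sum_comm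
              _ = ∑ j, ∑ k, ∑ i, (U i j * y j) * (U i k * y k) :=
                  Finset.sum_congr rfl fun j _ => Finset.sum_comm
        _ = ∑ j, ∑ k, (y j * y k) * ∑ i, U i j * U i k := by
            refine Finset.sum_congr rfl fun j _ => Finset.sum_congr rfl fun k _ => ?_
            rw [Finset.mul_sum]
            exact Finset.sum_congr rfl fun i _ => by ring
        _ = ∑ j, ∑ k, (y j * y k) * (if j = k then (1:ℝ) else 0) := by
            refine Finset.sum_congr rfl fun j _ => Finset.sum_congr rfl fun k _ => ?_
            rw [hU.1 j k]
        _ = ∑ j, y j ^ 2 := by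
            refine Finset.sum_congr rfl fun j _ => ?_
            simp [mul_ite, Finset.sum_ite_eq, pow_two]
        _ = 1 := hy
    have hmem : ∀ ε : Fin N → Bool,
        U ∈ E (zv ε) ↔ t ≤ ∑ i, (if ε i then (1:ℝ) else -1) * v i := by
      intro ε
      have hsum : ∑ i, ∑ j, zv ε i * U i j * y j
          = (∑ i, (if ε i then (1:ℝ) else -1) * v i) / Real.sqrt N := by
        rw [Finset.sum_div]
        refine Finset.sum_congr rfl fun i _ => ?_
        rw [hvdef]
        simp only [hzv]
        rw [Finset.mul_sum, Finset.sum_div]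
        refine Finset.sum_congr rfl fun j _ => ?_
        ring
      simp only [hE, Set.mem_setOf_eq, hsum]
      exact div_le_div_iff_of_pos_right hsN
    have hcast : ∑ ε : Fin N → Bool, (E (zv ε)).indicator (1 : (Fin N → Fin N → ℝ) → ENNReal) U
        = ((Finset.univ.filter (fun ε : Fin N → Bool =>
            t ≤ ∑ i, (if ε i then (1:ℝ) else -1) * v i)).card : ENNReal) := by
      have step : ∀ ε : Fin N → Bool, (E (zv ε)).indicator (1 : (Fin N → Fin N → ℝ) → ENNReal) U
          = if t ≤ ∑ i, (if ε i then (1:ℝ) else -1) * v i then 1 else 0 := by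
        intro ε
        rw [Set.indicator_apply]
        simp only [Pi.one_apply]
        exact if_congr (hmem ε) rfl rfl
      rw [Finset.sum_congr rfl fun ε _ => step ε]
      simp [Finset.sum_boole]
    rw [hcast]
    have := hoeffding_count N v hv t ht
    calc ((Finset.univ.filter (fun ε : Fin N → Bool =>
            t ≤ ∑ i, (if ε i then (1:ℝ) else -1) * v i)).card : ENNReal)
        = ENNReal.ofReal ((Finset.univ.filter (fun ε : Fin N → Bool =>
            t ≤ ∑ i, (if ε i then (1:ℝ) else -1) * v i)).card : ℝ) := by
          rw [ENNReal.ofReal_natCast]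
      _ ≤ ENNReal.ofReal ((2:ℝ) ^ N * Real.exp (-t ^ 2 / 2)) :=
          ENNReal.ofReal_le_ofReal this
  -- combine
  have hkey : (2 : ENNReal) ^ N * μ (E x) ≤ ENNReal.ofReal ((2:ℝ) ^ N * Real.exp (-t ^ 2 / 2)) := by
    calc (2 : ENNReal) ^ N * μ (E x)
        = ∑ _ε : Fin N → Bool, μ (E x) := by
          rw [Finset.sum_const, Finset.card_univ, nsmul_eq_mul]
          congr 1
          simp [Fintype.card_fun]
      _ = ∑ ε : Fin N → Bool, μ (E (zv ε)) := Finset.sum_congr rfl fun ε _ => (hEeq ε).symm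
      _ = ∫⁻ U, ∑ ε : Fin N → Bool, (E (zv ε)).indicator (1 : (Fin N → Fin N → ℝ) → ENNReal) U ∂μ := by
          rw [lintegral_finset_sum]
          · exact Finset.sum_congr rfl fun ε _ =>
              (lintegral_indicator_one (hmeasE (zv ε))).symm
          · exact fun ε _ => measurable_one.indicator (hmeasE (zv ε))
      _ ≤ ∫⁻ _U, ENNReal.ofReal ((2:ℝ) ^ N * Real.exp (-t ^ 2 / 2)) ∂μ := lintegral_mono_ae hcount
      _ = ENNReal.ofReal ((2:ℝ) ^ N * Real.exp (-t ^ 2 / 2)) := by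
          rw [lintegral_const, measure_univ, mul_one]
  have hsplit : ENNReal.ofReal ((2:ℝ) ^ N * Real.exp (-t ^ 2 / 2))
      = (2 : ENNReal) ^ N * ENNReal.ofReal (Real.exp (-t ^ 2 / 2)) := by
    rw [ENNReal.ofReal_mul (by positivity)]
    congr 1
    rw [ENNReal.ofReal_pow (by norm_num)]
    norm_num
  rw [hsplit] at hkey
  have h2N : ((2 : ENNReal) ^ N) ≠ 0 := pow_ne_zero N (by norm_num)
  have h2N' : ((2 : ENNReal) ^ N) ≠ ⊤ := by
    exact ENNReal.pow_ne_top (by norm_num)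
  have hfin : μ (E x) ≤ ENNReal.ofReal (Real.exp (-t ^ 2 / 2)) :=
    (ENNReal.mul_le_mul_iff_right h2N h2N').1 hkey
  have htoReal : (μ (E x)).toReal ≤ Real.exp (-t ^ 2 / 2) :=
    ENNReal.toReal_le_of_le_ofReal (Real.exp_nonneg _) hfin
  refine htoReal.trans ?_
  have h1 : Real.exp (-t ^ 2 / 2) ≤ Real.exp (-t ^ 2 / 8) := by
    apply Real.exp_le_exp.2
    nlinarith [sq_nonneg t]
  nlinarith [Real.exp_pos (-t ^ 2 / 8)]
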